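/- Let C be an additive code of length n over GF(4) with coordinates indexed 0, …, n−1, and suppose the trace dual C^⊥ has minimum weight d ≥ 2. If A ⊆ {1, …, n−1} has |A| < d − 1, then the shares in A cannot recover the secret: there exist codewords t, t' ∈ C with tᵢ = t'ᵢ for all i ∈ A but t₀ ≠ t'₀. -/

import Mathlib

/-- `GF(4)`, the field with 4 elements. -/
abbrev F4 := GaloisField 2 2

/-- The trace map `Tr : GF(4) → GF(2)`, `Tr(x) = x + x²` (valued in the prime subfield). -/
noncomputable def tr (x : F4) : F4 := x + x ^ 2

/-- The conjugate `ȳ = y²` of an element of `GF(4)`. -/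
noncomputable def conj (x : F4) : F4 := x ^ 2

/-- The Hamming weight: the number of nonzero coordinates. -/
noncomputable def wt {n : ℕ} (c : Fin n → F4) : ℕ := {i | c i ≠ 0}.ncard

/-- The trace dual of a code: all vectors whose trace inner product with every
codeword is zero. -/
def traceDual {n : ℕ} (C : Set (Fin n → F4)) : Set (Fin n → F4) :=
  {x | ∀ c ∈ C, ∑ i, tr (x i * conj (c i)) = 0}

noncomputable instance : Fintype F4 := Fintype.ofFinite _

lemma F4_card : Fintype.card F4 = 4 := by
  rw [← Nat.card_eq_fintype_card]; simpa using GaloisField.card 2 2 (by norm_num)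

lemma F4_pow_four (x : F4) : x ^ 4 = x := by
  have := FiniteField.pow_card x
  rwa [F4_card] at this

lemma F4_sq_add (x y : F4) : (x + y) ^ 2 = x ^ 2 + y ^ 2 := by
  have := add_pow_char (p := 2) (R := F4) x y
  simpa using this

lemma tr_add (x y : F4) : tr (x + y) = tr x + tr y := by
  simp only [tr, F4_sq_add]; ring

lemma tr_sq (x : F4) : tr (x ^ 2) = tr x := by
  simp only [tr]
  have : (x ^ 2) ^ 2 = x ^ 4 := by ring
  rw [this, F4_pow_four, add_comm]

lemma tr_zero_or_one (x : F4) : tr x = 0 ∨ tr x = 1 := by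
  have h : tr x ^ 2 = tr x := by
    simp only [tr, F4_sq_add]
    have : (x ^ 2) ^ 2 = x ^ 4 := by ring
    rw [this, F4_pow_four, add_comm]
  have : tr x * (tr x - 1) = 0 := by linear_combination h
  rcases mul_eq_zero.mp this with h | h
  · exact Or.inl h
  · exact Or.inr (by linear_combination h)

lemma neg_one_eq (x : F4) : -x = x := by
  have : (2 : F4) = 0 := by
    have := CharP.cast_eq_zero F4 2; simpa using this
  linear_combination -x * this

lemma tr_eq_zero_iff (x : F4) : tr x = 0 ↔ x = 0 ∨ x = 1 := by
  constructor
  · intro h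
    have : x * (1 + x) = 0 := by simp only [tr] at h; linear_combination h
    rcases mul_eq_zero.mp this with h | h
    · exact Or.inl h
    · right
      have := neg_one_eq x
      linear_combination -h - neg_one_eq x
  · rintro (rfl | rfl) <;> simp [tr] <;>
    · have : (2 : F4) = 0 := by have := CharP.cast_eq_zero F4 2; simpa using this
      linear_combination this

lemma exists_tr_one : ∃ w : F4, tr w = 1 := by
  by_contra h
  push_neg at h
  have h2 : ∀ w : F4, w = 0 ∨ w = 1 := by
    intro w
    rcases tr_zero_or_one w with h0 | h1
    · exact (tr_eq_zero_iff w).mp h0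
    · exact absurd h1 (h w)
  have hle : Fintype.card F4 ≤ 2 := by
    have hs : Function.Surjective (fun b : Bool => if b then (1:F4) else 0) := by
      intro w; rcases h2 w with rfl | rfl
      exacts [⟨false, rfl⟩, ⟨true, rfl⟩]
    calc Fintype.card F4 ≤ Fintype.card Bool := Fintype.card_le_of_surjective _ hs
    _ = 2 := by simp
  rw [F4_card] at hle; omega

/-- `tr` valued in `ZMod 2`. -/
noncomputable def tr2 (x : F4) : ZMod 2 :=
  @ite _ (tr x = 0) (Classical.dec _) 0 1

lemma cast_tr2 (x : F4) : algebraMap (ZMod 2) F4 (tr2 x) = tr x := by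
  unfold tr2
  rcases Classical.em (tr x = 0) with h | h
  · rw [if_pos h]; simp [h]
  · rw [if_neg h]
    rcases tr_zero_or_one x with h0 | h1
    · exact absurd h0 h
    · simp [h1]

lemma castinj : Function.Injective (algebraMap (ZMod 2) F4) :=
  (algebraMap (ZMod 2) F4).injective

lemma tr2_add (x y : F4) : tr2 (x + y) = tr2 x + tr2 y := by
  apply castinj
  rw [map_add, cast_tr2, cast_tr2, cast_tr2, tr_add]

lemma tr2_zero : tr2 0 = 0 := by
  apply castinj; rw [cast_tr2]; simp [tr]

lemma tr2_sq (x : F4) : tr2 (x ^ 2) = tr2 x := by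
  apply castinj; rw [cast_tr2, cast_tr2, tr_sq]

lemma tr2_comm (x y : F4) : tr2 (x * conj y) = tr2 (y * conj x) := by
  rw [← tr2_sq (x * conj y)]
  congr 1
  unfold conj
  have h : (x * y ^ 2) ^ 2 = x ^ 2 * y ^ 4 := by ring
  rw [h, F4_pow_four]; ring

lemma exists_tr2_pair (a : F4) (ha : a ≠ 0) : ∃ z : F4, tr2 (z * conj a) = 1 := by
  obtain ⟨w, hw⟩ := exists_tr_one
  refine ⟨w * (conj a)⁻¹, ?_⟩
  have hca : conj a ≠ 0 := pow_ne_zero 2 ha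
  have : w * (conj a)⁻¹ * conj a = w := by field_simp
  rw [this]
  unfold tr2
  rw [hw, if_neg one_ne_zero]

lemma zmod2_cases (r : ZMod 2) : r = 0 ∨ r = 1 := by
  fin_cases r
  · exact Or.inl rfl
  · exact Or.inr rfl

/-- The trace bilinear form over `ZMod 2`. -/
noncomputable def Bform (m : ℕ) : LinearMap.BilinForm (ZMod 2) (Fin m → F4) :=
  LinearMap.mk₂ (ZMod 2) (fun x y => ∑ i, tr2 (x i * conj (y i)))
    (fun x x' y => by
      simp only [Pi.add_apply, add_mul, tr2_add]
      rw [Finset.sum_add_distrib])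
    (fun r x y => by
      rcases zmod2_cases r with rfl | rfl
      · simp [tr2_zero]
      · simp)
    (fun x y y' => by
      have hc : ∀ a b : F4, conj (a + b) = conj a + conj b := fun a b => F4_sq_add a b
      simp only [Pi.add_apply, hc, mul_add, tr2_add]
      rw [Finset.sum_add_distrib])
    (fun r x y => by
      rcases zmod2_cases r with rfl | rfl
      · simp [conj, tr2_zero]
      · simp)

lemma Bform_apply {m : ℕ} (x y : Fin m → F4) :
    Bform m x y = ∑ i, tr2 (x i * conj (y i)) := rfl

lemma Bform_symm {m : ℕ} (x y : Fin m → F4) : Bform m x y = Bform m y x := by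
  simp only [Bform_apply]
  exact Finset.sum_congr rfl fun i _ => tr2_comm _ _

lemma Bform_refl {m : ℕ} : (Bform m).IsRefl := fun x y h => by
  rw [Bform_symm]; exact h

lemma Bform_single {m : ℕ} (j : Fin m) (z : F4) (y : Fin m → F4) :
    Bform m (Pi.single j z) y = tr2 (z * conj (y j)) := by
  rw [Bform_apply]
  rw [Finset.sum_eq_single j]
  · simp
  · intro i _ hij
    simp [Pi.single_eq_of_ne hij, tr2_zero]
  · simp

lemma Bform_nondeg {m : ℕ} : (Bform m).Nondegenerate := by
  have hl : ∀ x : Fin m → F4, (∀ y, Bform m x y = 0) → x = 0 := by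
    intro x hx
    funext j
    by_contra hj
    obtain ⟨z, hz⟩ := exists_tr2_pair (x j) hj
    have h := hx (Pi.single j z)
    rw [Bform_symm, Bform_single] at h
    rw [h] at hz
    exact one_ne_zero hz.symm
  exact ⟨hl, fun y hy => hl y fun x => by rw [Bform_symm]; exact hy x⟩

open LinearMap.BilinForm in
lemma orth_sup {m : ℕ} (B : LinearMap.BilinForm (ZMod 2) (Fin m → F4))
    (W₁ W₂ : Submodule (ZMod 2) (Fin m → F4)) :
    B.orthogonal (W₁ ⊔ W₂) = B.orthogonal W₁ ⊓ B.orthogonal W₂ := by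
  apply le_antisymm
  · exact le_inf (B.orthogonal_le le_sup_left) (B.orthogonal_le le_sup_right)
  · intro x hx
    rw [LinearMap.BilinForm.mem_orthogonal_iff]
    intro nn hn
    obtain ⟨a, ha, b, hb, rfl⟩ := Submodule.mem_sup.mp hn
    have h1 := LinearMap.BilinForm.mem_orthogonal_iff.mp hx.1 a ha
    have h2 := LinearMap.BilinForm.mem_orthogonal_iff.mp hx.2 b hb
    show B (a + b) x = 0
    rw [map_add, LinearMap.add_apply, h1, h2, add_zero]

open LinearMap.BilinForm in
lemma orth_inf {m : ℕ} (B : LinearMap.BilinForm (ZMod 2) (Fin m → F4))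
    (hB : B.Nondegenerate) (hr : B.IsRefl)
    (W₁ W₂ : Submodule (ZMod 2) (Fin m → F4)) :
    B.orthogonal (W₁ ⊓ W₂) = B.orthogonal W₁ ⊔ B.orthogonal W₂ := by
  have h : W₁ ⊓ W₂ = B.orthogonal (B.orthogonal W₁ ⊔ B.orthogonal W₂) := by
    rw [orth_sup, B.orthogonal_orthogonal hB hr, B.orthogonal_orthogonal hB hr]
  rw [h, B.orthogonal_orthogonal hB hr]

/-- If the trace dual of `C` has minimum weight `d ≥ 2` and `A` is a set of at most
`d - 2` participants (so `|A| < d - 1`), then the shares in `A` cannot recover the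
secret: there are codewords agreeing on `A` with different secret coordinates. -/
theorem small_groups_cannot_recover (n d : ℕ) (C : AddSubgroup (Fin (n + 1) → F4))
    (hd2 : 2 ≤ d)
    (hmin : ∀ x ∈ traceDual (C : Set (Fin (n + 1) → F4)), x ≠ 0 → d ≤ wt x)
    (hex : ∃ x ∈ traceDual (C : Set (Fin (n + 1) → F4)), x ≠ 0 ∧ wt x = d)
    (A : Set (Fin (n + 1))) (hA : 0 ∉ A) (hAcard : A.ncard < d - 1) :
    ∃ t ∈ C, ∃ t' ∈ C, (∀ i ∈ A, t i = t' i) ∧ t 0 ≠ t' 0 := by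
  classical
  by_contra hcon
  push_neg at hcon
  have hkey : ∀ c ∈ C, (∀ i ∈ A, c i = 0) → c 0 = 0 := by
    intro c hc h0
    have := hcon c hc 0 (zero_mem C) (fun i hi => by rw [h0 i hi]; rfl)
    simpa using this
  set B := Bform (n + 1) with hBdef
  let Cs : Submodule (ZMod 2) (Fin (n + 1) → F4) := AddSubgroup.toZModSubmodule 2 C
  let E : Submodule (ZMod 2) (Fin (n + 1) → F4) :=
    { carrier := {c | ∀ i ∈ A, c i = 0}
      add_mem' := fun {a b} ha hb i hi => by
        simp only [Pi.add_apply, ha i hi, hb i hi, add_zero]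
      zero_mem' := fun i _ => rfl
      smul_mem' := fun r x hx i hi => by
        simp only [Pi.smul_apply, hx i hi, smul_zero] }
  let F : Submodule (ZMod 2) (Fin (n + 1) → F4) :=
    { carrier := {x | ∀ i ∉ A, x i = 0}
      add_mem' := fun {a b} ha hb i hi => by
        simp only [Pi.add_apply, ha i hi, hb i hi, add_zero]
      zero_mem' := fun i _ => rfl
      smul_mem' := fun r x hx i hi => by
        simp only [Pi.smul_apply, hx i hi, smul_zero] }
  have hEF : E = B.orthogonal F := by
    ext x
    rw [LinearMap.BilinForm.mem_orthogonal_iff]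
    constructor
    · intro hx y hy
      show B y x = 0
      rw [Bform_apply]
      apply Finset.sum_eq_zero
      intro i _
      by_cases hi : i ∈ A
      · rw [hx i hi]
        simp [conj, tr2_zero]
      · rw [hy i hi]
        simp [tr2_zero]
    · intro hx i hi
      by_contra hne
      obtain ⟨z, hz⟩ := exists_tr2_pair (x i) hne
      have hsin : Pi.single i z ∈ F := by
        intro j hj
        have hji : j ≠ i := by rintro rfl; exact hj hi
        exact Pi.single_eq_of_ne (M := fun _ : Fin (n+1) => F4) hji z
      have h0 : B (Pi.single i z) x = 0 := hx _ hsin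
      rw [Bform_single] at h0
      rw [h0] at hz
      exact one_ne_zero hz.symm
  have hFE : B.orthogonal E = F := by
    rw [hEF, B.orthogonal_orthogonal Bform_nondeg Bform_refl]
  have h1 : Pi.single (0 : Fin (n + 1)) (1 : F4) ∈ B.orthogonal (Cs ⊓ E) := by
    rw [LinearMap.BilinForm.mem_orthogonal_iff]
    intro c hc
    show B c (Pi.single 0 1) = 0
    rw [Bform_symm, Bform_single]
    have hc0 : c 0 = 0 := hkey c hc.1 hc.2
    rw [hc0]
    simp [conj, tr2_zero]
  rw [orth_inf B Bform_nondeg Bform_refl, hFE] at h1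
  obtain ⟨u, hu, f, hf, huf⟩ := Submodule.mem_sup.mp h1
  have hf0 : f 0 = 0 := hf 0 hA
  have hu0 : u 0 = 1 := by
    have := congrFun huf 0
    simp only [Pi.add_apply, hf0, add_zero, Pi.single_eq_same] at this
    exact this
  have hsupp : ∀ i, i ∉ A → i ≠ 0 → u i = 0 := by
    intro i hi h0
    have := congrFun huf i
    simp only [Pi.add_apply, hf i hi, add_zero] at this
    rw [this, Pi.single_eq_of_ne h0]
  have hdual : u ∈ traceDual (C : Set (Fin (n + 1) → F4)) := by
    intro c hc
    have hBu : B c u = 0 := LinearMap.BilinForm.mem_orthogonal_iff.mp hu c hc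
    calc ∑ i, tr (u i * conj (c i))
        = algebraMap (ZMod 2) F4 (∑ i, tr2 (u i * conj (c i))) := by
          rw [map_sum]
          exact (Finset.sum_congr rfl fun i _ => (cast_tr2 _).symm)
      _ = algebraMap (ZMod 2) F4 (∑ i, tr2 (c i * conj (u i))) := by
          congr 1
          exact Finset.sum_congr rfl fun i _ => tr2_comm _ _
      _ = algebraMap (ZMod 2) F4 (B c u) := rfl
      _ = 0 := by rw [hBu, map_zero]
  have hune : u ≠ 0 := by
    intro h
    rw [h] at hu0
    simp at hu0
  have hwt : wt u < d := by
    have hsub : {i | u i ≠ 0} ⊆ A ∪ {0} := by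
      intro i hi
      by_contra hmem
      simp only [Set.mem_union, Set.mem_singleton_iff, not_or] at hmem
      exact hi (hsupp i hmem.1 hmem.2)
    have h1 : wt u ≤ (A ∪ {0}).ncard := Set.ncard_le_ncard hsub (Set.toFinite _)
    have h2 : (A ∪ {0}).ncard ≤ A.ncard + 1 := by
      have := Set.ncard_union_le A ({0} : Set (Fin (n + 1)))
      simpa using this
    omega
  exact absurd (hmin u hdual hune) (by omega)
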